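/- If a nonempty word u is not primitive, then the length of its primitive root equals the smallest positive index i < |u| such that u occurs in uu starting at position i (equivalently, the index of the first occurrence of u in u_F u_L, counting from 1). -/

import Mathlib

/-- k-fold concatenation (power) of a word. -/
def wpow {σ : Type*} (z : List σ) (k : ℕ) : List σ := (List.replicate k z).flatten

/-- A nonempty word is primitive if it is not a proper power. -/
def WPrimitive {σ : Type*} (w : List σ) : Prop :=
  w ≠ [] ∧ ∀ (v : List σ) (e : ℕ), 2 ≤ e → w ≠ wpow v e

theorem fin_pos_of_mul {p m : ℕ} (i : Fin (p * m)) : 0 < m :=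
  Nat.pos_of_ne_zero fun h => absurd i.isLt (by simp [h])

/-- `arrRep A p q` is `A^{p×q}`: the array `A` repeated in `p` rows and `q` columns. -/
def arrRep {σ : Type*} {m n : ℕ} (A : Fin m × Fin n → σ) (p q : ℕ) :
    Fin (p * m) × Fin (q * n) → σ :=
  fun x => A (⟨x.1.val % m, Nat.mod_lt _ (fin_pos_of_mul x.1)⟩,
              ⟨x.2.val % n, Nat.mod_lt _ (fin_pos_of_mul x.2)⟩)

/-- Equality of arrays of possibly (syntactically) different dimensions. -/
def arrEq {σ : Type*} {m n m' n' : ℕ} (A : Fin m × Fin n → σ)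
    (B : Fin m' × Fin n' → σ) : Prop :=
  m = m' ∧ n = n' ∧ ∀ (i j : ℕ) (h1 : i < m) (h2 : j < n) (h1' : i < m') (h2' : j < n'),
    A (⟨i, h1⟩, ⟨j, h2⟩) = B (⟨i, h1'⟩, ⟨j, h2'⟩)

/-- An array is primitive if it is not a nontrivial `p×q` repetition of another array. -/
def ArrPrimitive {σ : Type*} {m n : ℕ} (M : Fin m × Fin n → σ) : Prop :=
  ∀ (m' n' p q : ℕ) (A : Fin m' × Fin n' → σ), 0 < p → 0 < q →
    arrEq M (arrRep A p q) → p = 1 ∧ q = 1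

/-- Horizontal concatenation of arrays with equal numbers of rows. -/
def hcat {σ : Type*} {m1 m2 n1 n2 : ℕ} (h : m1 = m2)
    (A : Fin m1 × Fin n1 → σ) (B : Fin m2 × Fin n2 → σ) :
    Fin m1 × Fin (n1 + n2) → σ :=
  fun x => if hn : x.2.val < n1 then A (x.1, ⟨x.2.val, hn⟩)
           else B (⟨x.1.val, h ▸ x.1.isLt⟩, ⟨x.2.val - n1, by have := x.2.isLt; omega⟩)

/-- Vertical concatenation of arrays with equal numbers of columns. -/
def vcat {σ : Type*} {m1 m2 n1 n2 : ℕ} (h : n1 = n2)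
    (A : Fin m1 × Fin n1 → σ) (B : Fin m2 × Fin n2 → σ) :
    Fin (m1 + m2) × Fin n1 → σ :=
  fun x => if hm : x.1.val < m1 then A (⟨x.1.val, hm⟩, x.2)
           else B (⟨x.1.val - m1, by have := x.1.isLt; omega⟩, ⟨x.2.val, h ▸ x.2.isLt⟩)

/-- The word over the alphabet of columns corresponding to an array. -/
def colWord {σ : Type*} {m n : ℕ} (A : Fin m × Fin n → σ) : List (Fin m → σ) :=
  List.ofFn fun j => fun i => A (i, j)

/-- Row `i` of an array, as a word. -/
def rowWord {σ : Type*} {m n : ℕ} (A : Fin m × Fin n → σ) (i : Fin m) : List σ :=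
  List.ofFn fun j => A (i, j)

/-- Column `j` of an array, as a word. -/
def colAt {σ : Type*} {m n : ℕ} (A : Fin m × Fin n → σ) (j : Fin n) : List σ :=
  List.ofFn fun i => A (i, j)

/-- Row-major reading of an array. -/
def rowMajor {σ : Type*} {m n : ℕ} (A : Fin m × Fin n → σ) : List σ :=
  (List.ofFn fun i => rowWord A i).flatten

/-- `{x,y}*`: words that are concatenations of copies of `x` and `y`. -/
def InStar {σ : Type*} (x y w : List σ) : Prop :=
  ∃ L : List (List σ), (∀ u ∈ L, u = x ∨ u = y) ∧ w = L.flatten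



theorem wpow_succ {σ : Type*} (z : List σ) (k : ℕ) : wpow z (k+1) = z ++ wpow z k := by
  simp [wpow, List.replicate_succ]

theorem wpow_one {σ : Type*} (z : List σ) : wpow z 1 = z := by simp [wpow]

theorem wpow_length {σ : Type*} (z : List σ) (k : ℕ) : (wpow z k).length = k * z.length := by
  induction k with
  | zero => simp [wpow]
  | succ n ih => rw [wpow_succ, List.length_append, ih]; ring

theorem wpow_add {σ : Type*} (z : List σ) (a b : ℕ) : wpow z (a+b) = wpow z a ++ wpow z b := by
  induction a with
  | zero => simp [wpow]
  | succ n ih => rw [Nat.succ_add, wpow_succ, wpow_succ, ih, List.append_assoc]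

theorem take_app {σ : Type*} (z v : List σ) {r : ℕ} (hr : r ≤ z.length) :
    (z ++ v).take r = z.take r := by
  rw [List.take_append, Nat.sub_eq_zero_of_le hr, List.take_zero, List.append_nil]

theorem comm_pow {σ : Type*} (n : ℕ) : ∀ (x y : List σ), x.length + y.length ≤ n →
    x ++ y = y ++ x →
    ∃ (t : List σ) (a b : ℕ), x = wpow t a ∧ y = wpow t b ∧
      (x ≠ [] → 1 ≤ a) ∧ (y ≠ [] → 1 ≤ b) := by
  induction n with
  | zero =>
    intro x y hn _
    have hx : x = [] := List.eq_nil_of_length_eq_zero (by omega)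
    have hy : y = [] := List.eq_nil_of_length_eq_zero (by omega)
    exact ⟨[], 0, 0, by simp [hx, wpow], by simp [hy, wpow], by simp [hx], by simp [hy]⟩
  | succ n ih =>
    intro x y hn h
    rcases eq_or_ne x [] with rfl | hx
    · exact ⟨y, 0, 1, by simp [wpow], (wpow_one y).symm, by simp, fun _ => le_refl 1⟩
    rcases eq_or_ne y [] with rfl | hy
    · exact ⟨x, 1, 0, (wpow_one x).symm, by simp [wpow], fun _ => le_refl 1, by simp⟩
    have hx0 : 0 < x.length := List.length_pos_iff.mpr hx
    have hy0 : 0 < y.length := List.length_pos_iff.mpr hy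
    rcases le_or_gt x.length y.length with hle | hlt
    · obtain ⟨d, hd, hdl⟩ : ∃ d : List σ, y = x ++ d ∧ d.length = y.length - x.length := by
        refine ⟨y.drop x.length, ?_, List.length_drop⟩
        have h1 := congrArg (List.take x.length) h
        rw [List.take_left, take_app _ _ hle] at h1
        conv_lhs => rw [← List.take_append_drop x.length y, ← h1]
      have h2 : x ++ d = d ++ x := by
        have h3 : x ++ (x ++ d) = x ++ (d ++ x) := by
          rw [← hd, h, hd, List.append_assoc]
        exact List.append_cancel_left h3
      obtain ⟨t, a, b, hxa, hyb, hpa, hpb⟩ := ih x d (by omega) h2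
      exact ⟨t, a, a + b, hxa, by rw [hd, wpow_add, ← hxa, ← hyb],
        hpa, fun _ => by have := hpa hx; omega⟩
    · obtain ⟨d, hd, hdl⟩ : ∃ d : List σ, x = y ++ d ∧ d.length = x.length - y.length := by
        refine ⟨x.drop y.length, ?_, List.length_drop⟩
        have h1 := congrArg (List.take y.length) h.symm
        rw [List.take_left, take_app _ _ (le_of_lt hlt)] at h1
        conv_lhs => rw [← List.take_append_drop y.length x, ← h1]
      have h2 : d ++ y = y ++ d := by
        have h3 : y ++ (d ++ y) = y ++ (y ++ d) := by
          rw [← List.append_assoc, ← hd, h, hd]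
        exact List.append_cancel_left h3
      obtain ⟨t, a, b, hxa, hyb, hpa, hpb⟩ := ih d y (by omega) h2
      exact ⟨t, b + a, b, by rw [hd, wpow_add, ← hxa, ← hyb],
        hyb, fun _ => by have := hpb hy; omega, hpb⟩

theorem stmt18 {σ : Type*} (u z : List σ) (hu : u ≠ []) (hnp : ¬ WPrimitive u)
    (hz : WPrimitive z) (k : ℕ) (hk : 0 < k) (hzu : u = wpow z k) :
    IsLeast {i : ℕ | 0 < i ∧ i < u.length ∧
      (List.drop i (u ++ u)).take u.length = u} z.length := by
  have hz0 : z ≠ [] := hz.1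
  have hzl : 0 < z.length := List.length_pos_iff.mpr hz0
  have hk2 : 2 ≤ k := by
    by_contra hcon
    have hk1 : k = 1 := by omega
    subst hk1
    rw [wpow_one] at hzu
    exact hnp (hzu ▸ hz)
  have hul : u.length = k * z.length := by rw [hzu, wpow_length]
  have hu1 : u = z ++ wpow z (k - 1) := by
    rw [hzu, ← wpow_succ]; congr 1; omega
  constructor
  · refine ⟨hzl, ?_, ?_⟩
    · have h2 : 2 * z.length ≤ k * z.length := mul_le_mul_left hk2 z.length
      omega
    · have h1 : u ++ u = z ++ (wpow z k ++ wpow z (k - 1)) := by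
        rw [hzu, ← wpow_add z k (k-1), ← wpow_succ, ← wpow_add z k k]
        congr 1; omega
      rw [h1, List.drop_left, hzu, List.take_left]
  · rintro i ⟨hi0, hiu, hocc⟩
    set r := i % z.length with hrdef
    set q := i / z.length with hqdef
    have hqr : q * z.length + r = i := by rw [Nat.mul_comm]; exact Nat.div_add_mod i z.length
    have hr : r < z.length := Nat.mod_lt _ hzl
    have hiu' : i < k * z.length := hul ▸ hiu
    have hqk : q < k := by
      by_contra hc
      push_neg at hc
      have : k * z.length ≤ q * z.length := mul_le_mul_left hc z.length
      omega
    -- the rotation identity for u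
    have hdrop2 : List.drop i (u ++ u) = u.drop i ++ u := by
      rw [List.drop_append, Nat.sub_eq_zero_of_le (le_of_lt hiu), List.drop_zero]
    have H' : u.drop i ++ u.take i = u := by
      rw [hdrop2, List.take_append,
        List.take_of_length_le (by rw [List.length_drop]; omega),
        List.length_drop, Nat.sub_sub_self (le_of_lt hiu)] at hocc
      exact hocc
    have hsplit : u = wpow z q ++ (z ++ wpow z (k - q - 1)) := by
      rw [hzu, ← wpow_succ, ← wpow_add]
      congr 1; omega
    have hdu : u.drop i = z.drop r ++ wpow z (k - q - 1) := by
      rw [hsplit, List.drop_append,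
        List.drop_eq_nil_of_le (by rw [wpow_length]; omega),
        List.nil_append, wpow_length,
        show i - q * z.length = r from by omega,
        List.drop_append,
        Nat.sub_eq_zero_of_le (le_of_lt hr), List.drop_zero]
    set w := wpow z (k - q - 1) ++ u.take i with hwdef
    have hur : u.take r = z.take r := by rw [hu1, take_app _ _ (le_of_lt hr)]
    have hwr : w.take r = z.take r := by
      rcases Nat.lt_or_ge (q + 1) k with hq2 | hq1
      · have h5 : wpow z (k - q - 1) = z ++ wpow z (k - q - 2) := by
          rw [← wpow_succ]; congr 1; omega
        rw [hwdef, h5, List.append_assoc, take_app _ _ (le_of_lt hr)]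
      · have h5 : k - q - 1 = 0 := by omega
        rw [hwdef, h5, show wpow z 0 = ([] : List σ) from by simp [wpow], List.nil_append,
          List.take_take, Nat.min_eq_left (by omega), hur]
    -- the rotation identity for z
    have Hz : z.drop r ++ z.take r = z := by
      have H2 : z.drop r ++ w = u := by rw [hwdef, ← List.append_assoc, ← hdu, H']
      have H3 := congrArg (List.take z.length) H2
      rw [List.take_append,
        List.take_of_length_le (by rw [List.length_drop]; omega),
        List.length_drop, Nat.sub_sub_self (le_of_lt hr), hwr,
        hu1, List.take_left] at H3
      exact H3
    rcases Nat.eq_zero_or_pos r with hr0 | hrpos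
    · have hq1 : 1 ≤ q := by
        rcases Nat.eq_zero_or_pos q with h0 | h1
        · simp [h0] at hqr; omega
        · exact h1
      calc z.length = 1 * z.length := (one_mul _).symm
        _ ≤ q * z.length := mul_le_mul_left hq1 z.length
        _ ≤ i := by omega
    · exfalso
      have hcomm : z.take r ++ z.drop r = z.drop r ++ z.take r := by
        rw [List.take_append_drop, Hz]
      obtain ⟨t, a, b, hta, htb, hpa, hpb⟩ :=
        comm_pow ((z.take r).length + (z.drop r).length) (z.take r) (z.drop r)
          (le_refl _) hcomm
      have hzeq : z = wpow t (a + b) := by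
        rw [wpow_add, ← hta, ← htb, List.take_append_drop]
      have ha : 1 ≤ a := hpa (List.length_pos_iff.mp (by rw [List.length_take]; omega))
      have hb : 1 ≤ b := hpb (List.length_pos_iff.mp (by rw [List.length_drop]; omega))
      exact hz.2 t (a + b) (by omega) hzeq
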